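/- Let K be an algebraic number field of class number one, let ε be a unit of O_K, let π be a prime element of O_K, and suppose that for some n ∈ ℕ and w ∈ O_K one has ε^n = 1 + π·w with π ∤ w. Then ε^(N(π)−1) ≢ 1 (mod π²). (Equivalently: if a prime π divides ε^n − 1 but π² does not divide ε^n − 1, then π is a non-Wieferich prime to the base ε.) -/
import Mathlib


open NumberField Filter

variable (K : Type*) [Field K] [NumberField K]

/-- Binomial expansion to second order: `x² ∣ (1+x)^m − (1 + m·x)`. -/
lemma sq_dvd_one_add_pow {R : Type*} [CommRing R] (x : R) (m : ℕ) :
    x ^ 2 ∣ (1 + x) ^ m - (1 + (m : R) * x) := by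
  induction m with
  | zero => simp
  | succ k ih =>
    have hkey : (1 + x) ^ (k + 1) - (1 + ((k + 1 : ℕ) : R) * x)
        = (1 + x) * ((1 + x) ^ k - (1 + (k : R) * x)) + (k : R) * x ^ 2 := by
      push_cast; ring
    rw [hkey]
    exact dvd_add (ih.mul_left _) (Dvd.dvd.mul_left dvd_rfl _)

/-- The absolute value of the norm `N_{K/ℚ}` of an algebraic integer, as a natural number. -/
noncomputable def absNormElem (x : 𝓞 K) : ℕ := (Algebra.norm ℤ x).natAbs

/-- Let `K` be a number field of class number one, `ε` a unit of `𝓞 K`, and `π` a prime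
element of `𝓞 K`. If `ε^n = 1 + π * w` for some `n ∈ ℕ` and `w ∈ 𝓞 K` with `π ∤ w`, then
`ε^(N(π)−1) ≢ 1 (mod π²)`. -/
theorem nonWieferich_of_exactly_divides
    (hclass : NumberField.classNumber K = 1)
    (ε : (𝓞 K)ˣ) (π w : 𝓞 K) (n : ℕ) (hπ : Prime π)
    (heq : (ε : 𝓞 K) ^ n = 1 + π * w) (hw : ¬ π ∣ w) :
    ¬ (π ^ 2 ∣ (ε : 𝓞 K) ^ (absNormElem K π - 1) - 1) := by
  intro h
  set q : ℕ := absNormElem K π with hqdef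
  -- `q` is the absolute norm of the ideal `(π)`
  have habs : q = Ideal.absNorm (Ideal.span {π}) := by
    rw [Ideal.absNorm_span_singleton]; rfl
  -- `π ∣ q` in `𝓞 K`
  have hπq : π ∣ ((q : ℤ) : 𝓞 K) := by
    rw [← Ideal.mem_span_singleton, habs]
    exact_mod_cast Ideal.absNorm_mem (Ideal.span {π})
  -- `q > 0`
  have hq0 : 0 < q := by
    rw [habs]
    refine Nat.pos_of_ne_zero ?_
    intro h0
    have := Ideal.absNorm_eq_zero_iff.mp h0
    rw [Ideal.span_singleton_eq_bot] at this
    exact hπ.ne_zero this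
  -- π² divides (ε^(q-1))^n − 1
  have h1 : π ^ 2 ∣ ((ε : 𝓞 K) ^ (q - 1)) ^ n - 1 := by
    have := sub_dvd_pow_sub_pow ((ε : 𝓞 K) ^ (q - 1)) 1 n
    simpa using h.trans (by simpa using this)
  -- hence π² divides (1 + π w)^(q-1) − 1
  have h2 : π ^ 2 ∣ (1 + π * w) ^ (q - 1) - 1 := by
    rw [← heq, ← pow_mul, mul_comm, pow_mul]
    exact h1
  -- binomial expansion
  have h3 : π ^ 2 ∣ (1 + π * w) ^ (q - 1) - (1 + ((q - 1 : ℕ) : 𝓞 K) * (π * w)) :=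
    dvd_trans (pow_dvd_pow_of_dvd (dvd_mul_right π w) 2) (sq_dvd_one_add_pow (π * w) (q - 1))
  -- subtract
  have h4 : π ^ 2 ∣ ((q - 1 : ℕ) : 𝓞 K) * (π * w) := by
    have := dvd_sub h2 h3
    simpa using this
  -- cancel one π
  have h5 : π ∣ ((q - 1 : ℕ) : 𝓞 K) * w := by
    have hmul : π * (((q - 1 : ℕ) : 𝓞 K) * w) = ((q - 1 : ℕ) : 𝓞 K) * (π * w) := by ring
    have := h4
    rw [pow_two, ← hmul] at this
    exact (mul_dvd_mul_iff_left hπ.ne_zero).mp this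
  have h6 : π ∣ ((q - 1 : ℕ) : 𝓞 K) := (hπ.dvd_mul.mp h5).resolve_right hw
  have h7 : π ∣ 1 := by
    have hcast : ((q : ℤ) : 𝓞 K) - ((q - 1 : ℕ) : 𝓞 K) = 1 := by
      have : ((q - 1 : ℕ) : 𝓞 K) = (q : 𝓞 K) - 1 := by
        push_cast [Nat.cast_sub hq0]
        ring
      rw [this]; push_cast; ring
    calc π ∣ ((q : ℤ) : 𝓞 K) - ((q - 1 : ℕ) : 𝓞 K) := dvd_sub hπq h6
      _ = 1 := hcast
  exact hπ.not_unit (isUnit_of_dvd_one h7)
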